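/- Let X be a T0 space that is I-stable and I-continuous. Then the I-convergence in X is topological: for every net (x_i) in X and every y ∈ X, the net (x_i) I-converges to y if and only if (x_i) converges to y with respect to the topology on X generated by σ_I (equivalently, for every U ∈ σ_I with y ∈ U, x_i ∈ U eventually). -/
import Mathlib


universe u

/-- The specialisation order of a topological space: `x ≤ y` iff `x ∈ closure {y}`. -/
def sle {X : Type u} [TopologicalSpace X] (x y : X) : Prop :=
  x ∈ closure ({y} : Set X)

/-- Upper bounds with respect to the specialisation order. -/
def sUB {X : Type u} [TopologicalSpace X] (A : Set X) : Set X :=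
  {u | ∀ a ∈ A, sle a u}

/-- `s` is the least upper bound of `A` with respect to the specialisation order. -/
def sIsLUB {X : Type u} [TopologicalSpace X] (A : Set X) (s : X) : Prop :=
  s ∈ sUB A ∧ ∀ u ∈ sUB A, sle s u

/-- `x ≪_I y`: for every irreducible set `E` having a supremum above `y`,
some element of `E` is above `x`. -/
def IBelow {X : Type u} [TopologicalSpace X] (x y : X) : Prop :=
  ∀ E : Set X, IsIrreducible E → ∀ s : X, sIsLUB E s → sle y s → ∃ e ∈ E, sle x e

/-- `X` is I-continuous: for every `y`, the set `↡_I y` is irreducible with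
least upper bound `y`. -/
def IContinuous (X : Type u) [TopologicalSpace X] : Prop :=
  ∀ y : X, IsIrreducible {x | IBelow x y} ∧ sIsLUB {x | IBelow x y} y

/-- `X` is I-stable: `↟_I U` is open for every open `U`. -/
def IStable (X : Type u) [TopologicalSpace X] : Prop :=
  ∀ U : Set X, IsOpen U → IsOpen {x : X | ∃ a ∈ U, IBelow a x}

/-- `X` is sup-sober: every closed irreducible set with a supremum is the closure
of that supremum. -/
def SupSober (X : Type u) [TopologicalSpace X] : Prop :=
  ∀ F : Set X, IsClosed F → IsIrreducible F → ∀ s : X, sIsLUB F s → F = closure ({s} : Set X)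

/-- The collection σ_I: upper sets (w.r.t. specialisation) inaccessible by suprema of
irreducible sets. -/
def sigmaI (X : Type u) [TopologicalSpace X] : Set (Set X) :=
  {U | (∀ a ∈ U, ∀ b : X, sle a b → b ∈ U) ∧
       ∀ E : Set X, IsIrreducible E → ∀ s : X, sIsLUB E s → s ∈ U → (U ∩ E).Nonempty}

/-- The irreducibly derived topology τ_SI: open sets inaccessible by suprema of
irreducible sets. -/
def tauSI (X : Type u) [TopologicalSpace X] : Set (Set X) :=
  {U | IsOpen U ∧ ∀ E : Set X, IsIrreducible E → ∀ s : X, sIsLUB E s → s ∈ U → (E ∩ U).Nonempty}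

/-- The net `x` I-converges to `y`: there is an irreducible set `E` with a supremum above `y`,
all of whose elements are eventual lower bounds of the net. -/
def IConv {X : Type u} [TopologicalSpace X] {ι : Type u} [Preorder ι]
    (x : ι → X) (y : X) : Prop :=
  ∃ E : Set X, IsIrreducible E ∧
    (∀ e ∈ E, ∃ i₀ : ι, ∀ i : ι, i₀ ≤ i → sle e (x i)) ∧
    ∃ s : X, sIsLUB E s ∧ sle y s

/-- `D` is directed with respect to the specialisation order. -/
def sDirectedOn {X : Type u} [TopologicalSpace X] (D : Set X) : Prop :=
  ∀ a ∈ D, ∀ b ∈ D, ∃ c ∈ D, sle a c ∧ sle b c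

/-- Way-below in the specialisation poset, via nonempty directed sets. -/
def sWayBelow {X : Type u} [TopologicalSpace X] (x y : X) : Prop :=
  ∀ D : Set X, D.Nonempty → sDirectedOn D → ∀ s : X, sIsLUB D s → sle y s → ∃ d ∈ D, sle x d

/-- `X` is a DI space: the supremum of any irreducible set is also attained as the supremum
of a nonempty directed subset of its lower closure. -/
def DISpace (X : Type u) [TopologicalSpace X] : Prop :=
  ∀ E : Set X, IsIrreducible E → ∀ s : X, sIsLUB E s →
    ∃ D : Set X, D.Nonempty ∧ sDirectedOn D ∧ (∀ d ∈ D, ∃ e ∈ E, sle d e) ∧ sIsLUB D s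

/-- `U` is τ_I-open: every net that I-converges to a point of `U` is eventually in `U`. -/
def TauIOpen {X : Type u} [TopologicalSpace X] (U : Set X) : Prop :=
  ∀ (ι : Type u) [Preorder ι] [Nonempty ι],
    (∀ i j : ι, ∃ k : ι, i ≤ k ∧ j ≤ k) →
    ∀ x : ι → X, ∀ y ∈ U, IConv x y →
    ∃ i₀ : ι, ∀ i : ι, i₀ ≤ i → x i ∈ U

section Aux

variable {X : Type u} [TopologicalSpace X]

lemma sle_refl' (x : X) : sle x x := subset_closure rfl

lemma sle_trans' {a b c : X} (h1 : sle a b) (h2 : sle b c) : sle a c := by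
  have : closure ({b} : Set X) ⊆ closure ({c} : Set X) :=
    closure_minimal (Set.singleton_subset_iff.mpr h2) isClosed_closure
  exact this h1

lemma open_upper' {U : Set X} (hU : IsOpen U) {a b : X} (ha : a ∈ U) (hab : sle a b) :
    b ∈ U := by
  rcases (mem_closure_iff.mp hab) U hU ha with ⟨z, hzU, hz⟩
  rcases hz with rfl
  exact hzU

lemma closure_singleton_lub (z : X) : sIsLUB (closure ({z} : Set X)) z :=
  ⟨fun a ha => ha, fun u hu => hu z (subset_closure rfl)⟩

lemma ibelow_le {e z : X} (h : IBelow e z) : sle e z := by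
  rcases h (closure ({z} : Set X)) isIrreducible_singleton.closure z
      (closure_singleton_lub z) (sle_refl' z) with ⟨a, ha, hea⟩
  exact sle_trans' hea ha

lemma ibelow_left_le {e a b : X} (h1 : sle e a) (h2 : IBelow a b) : IBelow e b := by
  intro E hE s hs hbs
  rcases h2 E hE s hs hbs with ⟨f, hf, haf⟩
  exact ⟨f, hf, sle_trans' h1 haf⟩

lemma ibelow_right_le {a b c : X} (h1 : IBelow a b) (h2 : sle b c) : IBelow a c := by
  intro E hE s hs hcs
  exact h1 E hE s hs (sle_trans' h2 hcs)

/-- Interpolation property of `≪_I` in I-stable I-continuous spaces. -/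
lemma ibelow_interp (hstable : IStable X) (hcont : IContinuous X) {e y : X}
    (h : IBelow e y) : ∃ b, IBelow e b ∧ IBelow b y := by
  set Estar : Set X := {a | ∃ b, IBelow a b ∧ IBelow b y} with hEstar
  have hne : Estar.Nonempty := by
    rcases (hcont y).1.nonempty with ⟨b, hb⟩
    rcases (hcont b).1.nonempty with ⟨a, ha⟩
    exact ⟨a, b, ha, hb⟩
  have hirr : IsIrreducible Estar := by
    refine ⟨hne, ?_⟩
    rintro U V hU hV ⟨a1, ⟨b1, hab1, hb1y⟩, ha1U⟩ ⟨a2, ⟨b2, hab2, hb2y⟩, ha2V⟩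
    -- ↟_I U and ↟_I V are open by stability
    set hatU : Set X := {z : X | ∃ a ∈ U, IBelow a z} with hhatU
    set hatV : Set X := {z : X | ∃ a ∈ V, IBelow a z} with hhatV
    have hhatUopen : IsOpen hatU := hstable U hU
    have hhatVopen : IsOpen hatV := hstable V hV
    have hb1U : b1 ∈ U := open_upper' hU ha1U (ibelow_le hab1)
    have hb2V : b2 ∈ V := open_upper' hV ha2V (ibelow_le hab2)
    have hb1hat : b1 ∈ {x | IBelow x y} ∩ hatU := ⟨hb1y, a1, ha1U, hab1⟩
    have hb2hat : b2 ∈ {x | IBelow x y} ∩ hatV := ⟨hb2y, a2, ha2V, hab2⟩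
    rcases (hcont y).1.2 hatU hatV hhatUopen hhatVopen ⟨b1, hb1hat⟩ ⟨b2, hb2hat⟩ with
      ⟨b, hby, ⟨a, haU, hab⟩, ⟨a', ha'V, ha'b⟩⟩
    -- ↡_I b meets U and V
    have hmeetsU : ({x | IBelow x b} ∩ U).Nonempty := by
      rcases hab {x | IBelow x b} (hcont b).1 b (hcont b).2 (sle_refl' b) with ⟨c, hc, hac⟩
      exact ⟨c, hc, open_upper' hU haU hac⟩
    have hmeetsV : ({x | IBelow x b} ∩ V).Nonempty := by
      rcases ha'b {x | IBelow x b} (hcont b).1 b (hcont b).2 (sle_refl' b) with ⟨c, hc, hac⟩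
      exact ⟨c, hc, open_upper' hV ha'V hac⟩
    rcases (hcont b).1.2 U V hU hV hmeetsU hmeetsV with ⟨c, hcb, hcU, hcV⟩
    exact ⟨c, ⟨b, hcb, hby⟩, hcU, hcV⟩
  have hlub : sIsLUB Estar y := by
    constructor
    · rintro a ⟨b, hab, hby⟩
      exact sle_trans' (ibelow_le hab) (ibelow_le hby)
    · intro u hu
      refine (hcont y).2.2 u ?_
      intro b hby
      refine (hcont b).2.2 u ?_
      intro a hab
      exact hu a ⟨b, hab, hby⟩
  rcases h Estar hirr y hlub (sle_refl' y) with ⟨a, ⟨b, hab, hby⟩, hea⟩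
  exact ⟨b, ibelow_left_le hea hab, hby⟩

/-- In I-stable I-continuous spaces, `↟_I e` belongs to σ_I. -/
lemma upset_mem_sigmaI (hstable : IStable X) (hcont : IContinuous X) (e : X) :
    {z : X | IBelow e z} ∈ sigmaI X := by
  constructor
  · intro a ha b hab
    exact ibelow_right_le ha hab
  · intro E hE s hs hsmem
    rcases ibelow_interp hstable hcont hsmem with ⟨f, hef, hfs⟩
    rcases hfs E hE s hs (sle_refl' s) with ⟨d, hdE, hfd⟩
    exact ⟨d, ibelow_right_le hef hfd, hdE⟩

end Aux

/-- In an I-stable I-continuous T0 space, I-convergence is topological: it coincides with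
convergence in the topology generated by σ_I. -/
theorem stmt17 {X : Type u} [TopologicalSpace X] [T0Space X]
    (hstable : IStable X) (hcont : IContinuous X)
    (ι : Type u) [Preorder ι] [Nonempty ι]
    (hdir : ∀ i j : ι, ∃ k : ι, i ≤ k ∧ j ≤ k)
    (x : ι → X) (y : X) :
    IConv x y ↔
      ∀ V : Set X, (TopologicalSpace.generateFrom (sigmaI X)).IsOpen V → y ∈ V →
        ∃ i₀ : ι, ∀ i : ι, i₀ ≤ i → x i ∈ V := by
  constructor
  · rintro ⟨E, hE, hlb, s, hs, hys⟩ V hV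
    have hV' : TopologicalSpace.GenerateOpen (sigmaI X) V := hV
    clear hV
    induction hV' with
    | basic U hU =>
      intro hyU
      have hsU : s ∈ U := hU.1 y hyU s hys
      rcases hU.2 E hE s hs hsU with ⟨e, heU, heE⟩
      rcases hlb e heE with ⟨i₀, hi₀⟩
      exact ⟨i₀, fun i hi => hU.1 e heU (x i) (hi₀ i hi)⟩
    | univ =>
      intro _
      exact ⟨Classical.arbitrary ι, fun _ _ => trivial⟩
    | inter U W _ _ ihU ihW =>
      rintro ⟨hyU, hyW⟩
      rcases ihU hyU with ⟨i₁, hi₁⟩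
      rcases ihW hyW with ⟨i₂, hi₂⟩
      rcases hdir i₁ i₂ with ⟨k, hk₁, hk₂⟩
      exact ⟨k, fun i hi => ⟨hi₁ i (le_trans hk₁ hi), hi₂ i (le_trans hk₂ hi)⟩⟩
    | sUnion S hS ih =>
      intro hy
      rcases hy with ⟨t, htS, hyt⟩
      rcases ih t htS hyt with ⟨i₀, hi₀⟩
      exact ⟨i₀, fun i hi => ⟨t, htS, hi₀ i hi⟩⟩
  · intro h
    refine ⟨{x | IBelow x y}, (hcont y).1, ?_, y, (hcont y).2, sle_refl' y⟩
    intro e he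
    have hmem : ({z : X | IBelow e z}) ∈ sigmaI X := upset_mem_sigmaI hstable hcont e
    have hopen : (TopologicalSpace.generateFrom (sigmaI X)).IsOpen {z : X | IBelow e z} :=
      TopologicalSpace.GenerateOpen.basic _ hmem
    rcases h _ hopen he with ⟨i₀, hi₀⟩
    exact ⟨i₀, fun i hi => ibelow_le (hi₀ i hi)⟩
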